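/- Let (Ω,F,P) carry i.i.d. fair ±-valued random variables B₁,B₂,…, with filtration F_n = σ(B₁,…,B_n). Suppose {I_n} and {T_n} are [0,1]-valued F_n-adapted processes such that {I_n} is a martingale, T_{n+1} = T_n² whenever B_{n+1} = +, and for every ε > 0 there exists δ > 0 such that I_n ∈ (ε, 1−ε) implies T_n ∈ (δ, 1−δ). Then I_n converges almost surely to a random variable I_∞ taking values in {0,1}, and P(I_∞ = 1) = I₀. -/

import Mathlib

open MeasureTheory Filter

section Aux

variable {Ω : Type*} [m : MeasurableSpace Ω] {P : Measure Ω} [IsProbabilityMeasure P]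

lemma coin_inter_prob {B : ℕ → Ω → Bool}
    (hindep : ProbabilityTheory.iIndepFun B P)
    (hfair : ∀ n, P {ω | B n ω = true} = 1 / 2) (S : Finset ℕ) :
    P (⋂ i ∈ S, B i ⁻¹' {true}) = (1 / 2 : ENNReal) ^ S.card := by
  have h := hindep.measure_inter_preimage_eq_mul S (sets := fun _ => ({true} : Set Bool))
    (fun i _ => measurableSet_singleton true)
  rw [h]
  have hpre : ∀ i : ℕ, B i ⁻¹' {true} = {ω | B i ω = true} := fun i => rfl
  simp only [hpre, hfair, Finset.prod_const]

end Aux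

theorem polarization_martingale_convergence
    {Ω : Type*} [m : MeasurableSpace Ω] (P : Measure Ω) [IsProbabilityMeasure P]
    (B : ℕ → Ω → Bool) (hmeas : ∀ n, Measurable (B n))
    (hindep : ProbabilityTheory.iIndepFun B P)
    (hfair : ∀ n, P {ω | B n ω = true} = 1 / 2)
    (F : Filtration ℕ m)
    (hF : ∀ n, F n = ⨆ i ∈ Finset.range n, MeasurableSpace.comap (B i) ⊤)
    (I T : ℕ → Ω → ℝ)
    (hI01 : ∀ n ω, I n ω ∈ Set.Icc (0 : ℝ) 1)
    (hImart : Martingale I F P)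
    (hT01 : ∀ n ω, T n ω ∈ Set.Icc (0 : ℝ) 1)
    (hTadapted : Adapted F T)
    (hTsq : ∀ n ω, B n ω = true → T (n + 1) ω = T n ω ^ 2)
    (hIT : ∀ ε > (0 : ℝ), ∃ δ > (0 : ℝ), ∀ n ω,
      I n ω ∈ Set.Ioo ε (1 - ε) → T n ω ∈ Set.Ioo δ (1 - δ))
    (I0 : ℝ) (hI0 : ∀ ω, I 0 ω = I0) :
    ∃ Ilim : Ω → ℝ,
      (∀ᵐ ω ∂P, Tendsto (fun n => I n ω) atTop (nhds (Ilim ω))) ∧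
      (∀ᵐ ω ∂P, Ilim ω = 0 ∨ Ilim ω = 1) ∧
      P {ω | Ilim ω = 1} = ENNReal.ofReal I0 := by
  classical
  -- the limit process
  set Ilim : Ω → ℝ := F.limitProcess I P with hIlimdef
  have hbdd : ∀ n, eLpNorm (I n) 1 P ≤ (1 : NNReal) := by
    intro n
    have h := eLpNorm_le_of_ae_bound (μ := P) (p := 1) (f := I n) (C := 1)
      (Filter.Eventually.of_forall (fun ω => by
        have h := hI01 n ω
        rw [Real.norm_eq_abs, abs_le]
        constructor <;> linarith [h.1, h.2]))
    simpa using h.trans_eq (by simp)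
  have htend : ∀ᵐ ω ∂P, Tendsto (fun n => I n ω) atTop (nhds (Ilim ω)) :=
    hImart.submartingale.ae_tendsto_limitProcess hbdd
  -- zero-one law for the limit: key claim for each j
  have key : ∀ j : ℕ, ∀ᵐ ω ∂P,
      ¬(Tendsto (fun n => I n ω) atTop (nhds (Ilim ω)) ∧
        Ilim ω ∈ Set.Icc ((1 : ℝ)/(j+2)) (1 - (1 : ℝ)/(j+2))) := by
    intro j
    set ε : ℝ := (1 : ℝ)/(j+2) with hεdef
    have hεpos : 0 < ε := by positivity
    obtain ⟨δ0, hδ0pos, hIT0⟩ := hIT (ε/2) (by positivity)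
    set δ : ℝ := min δ0 (1/4) with hδdef
    have hδpos : 0 < δ := lt_min hδ0pos (by norm_num)
    have hδlt : δ < 1 := lt_of_le_of_lt (min_le_right _ _) (by norm_num)
    have hIT' : ∀ n ω, I n ω ∈ Set.Ioo (ε/2) (1 - ε/2) → T n ω ∈ Set.Ioo δ (1 - δ) := by
      intro n ω h
      have := hIT0 n ω h
      constructor
      · exact lt_of_le_of_lt (min_le_left _ _) this.1
      · have := this.2; have h4 : δ ≤ δ0 := min_le_left _ _; linarith
    -- choose k
    obtain ⟨N, hN⟩ := exists_pow_lt_of_lt_one hδpos (by linarith : 1 - δ < 1)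
    set k : ℕ := max N 1 with hkdef
    have hk1 : 1 ≤ k := le_max_right _ _
    have hkpow : (1 - δ) ^ (2 ^ k) < δ := by
      have h1 : N ≤ 2 ^ k := le_trans (le_max_left N 1) (Nat.lt_two_pow_self (n := k)).le
      have h2 : (1 - δ) ^ (2 ^ k) ≤ (1 - δ) ^ N :=
        pow_le_pow_of_le_one (by linarith) (by linarith) h1
      linarith
    -- block events
    set C : ℕ → Set Ω := fun b => ⋂ i ∈ Finset.range k, B (b * k + i) ⁻¹' {true} with hCdef
    have hCm : ∀ b, MeasurableSet (C b) := fun b =>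
      Finset.measurableSet_biInter _ (fun i _ => (hmeas _) (measurableSet_singleton true))
    -- index blocks
    set f : ℕ → Finset ℕ := fun b => (Finset.range k).image (fun i => b * k + i) with hfdef
    have hfcard : ∀ b, (f b).card = k := by
      intro b
      rw [Finset.card_image_of_injective _ (add_right_injective (b * k)), Finset.card_range]
    have hfC : ∀ b, (⋂ i ∈ f b, B i ⁻¹' {true}) = C b := by
      intro b
      rw [Finset.set_biInter_finset_image]
    have hCprob : ∀ b, P (C b) = (1/2 : ENNReal) ^ k := by
      intro b
      rw [← hfC b, coin_inter_prob hindep hfair, hfcard]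
    have hfdisj : ∀ b1 b2 : ℕ, b1 ≠ b2 → Disjoint (f b1) (f b2) := by
      intro b1 b2 hne
      rw [Finset.disjoint_left]
      intro x hx1 hx2
      simp only [hfdef, Finset.mem_image, Finset.mem_range] at hx1 hx2
      obtain ⟨i1, hi1, rfl⟩ := hx1
      obtain ⟨i2, hi2, he⟩ := hx2
      apply hne
      have e1 : (b1 * k + i1) / k = b1 := by
        rw [add_comm, mul_comm, Nat.add_mul_div_left _ _ (by omega : 0 < k), Nat.div_eq_of_lt hi1]
        omega
      have e2 : (b2 * k + i2) / k = b2 := by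
        rw [add_comm, mul_comm, Nat.add_mul_div_left _ _ (by omega : 0 < k), Nat.div_eq_of_lt hi2]
        omega
      rw [← e1, ← e2, he]
    -- independence of block events
    have hCind : ProbabilityTheory.iIndepSet C P := by
      rw [ProbabilityTheory.iIndepSet_iff_meas_biInter hCm]
      intro J
      have hinter : (⋂ b ∈ J, C b) = ⋂ i ∈ J.biUnion f, B i ⁻¹' {true} := by
        rw [Finset.set_biInter_biUnion]
        exact (Set.iInter₂_congr fun b _ => hfC b).symm
      rw [hinter, coin_inter_prob hindep hfair]
      have hcard : (J.biUnion f).card = J.card * k := by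
        rw [Finset.card_biUnion (fun x _ y _ hxy => hfdisj x y hxy)]
        simp [hfcard, Finset.sum_const, mul_comm]
      rw [hcard]
      simp only [hCprob, Finset.prod_const, ← pow_mul, mul_comm]
    -- Borel-Cantelli
    have hsum : (∑' b, P (C b)) = ⊤ := by
      simp only [hCprob]
      exact ENNReal.tsum_const_eq_top_of_ne_zero (pow_ne_zero k (by norm_num))
    have hBC : P (limsup C atTop) = 1 :=
      ProbabilityTheory.measure_limsup_eq_one hCm hCind hsum
    have hae : ∀ᵐ ω ∂P, ω ∈ limsup C atTop := by
      rw [ae_iff]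
      have hms : MeasurableSet (limsup C atTop) := MeasurableSet.measurableSet_limsup hCm
      have : {ω | ¬ ω ∈ limsup C atTop} = (limsup C atTop)ᶜ := rfl
      rw [this, measure_compl hms (measure_ne_top _ _), hBC, measure_univ, tsub_self]
    filter_upwards [hae] with ω hω
    rintro ⟨htendω, hIcc⟩
    -- eventually I n ω ∈ (ε/2, 1 - ε/2)
    obtain ⟨M, hM⟩ := Metric.tendsto_atTop.mp htendω (ε/2) (by positivity)
    have hIin : ∀ n, M ≤ n → I n ω ∈ Set.Ioo (ε/2) (1 - ε/2) := by
      intro n hn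
      have hd := hM n hn
      rw [Real.dist_eq, abs_lt] at hd
      have h1 := hIcc.1; have h2 := hIcc.2
      constructor <;> [linarith; linarith]
    have hTin : ∀ n, M ≤ n → T n ω ∈ Set.Ioo δ (1 - δ) :=
      fun n hn => hIT' n ω (hIin n hn)
    -- find a block after M
    rw [Filter.mem_limsup_iff_frequently_mem] at hω
    obtain ⟨b, hbM, hbC⟩ := Filter.frequently_atTop.mp hω M
    have hcoins : ∀ i, i < k → B (b * k + i) ω = true := by
      intro i hi
      have := Set.mem_iInter₂.mp hbC i (Finset.mem_range.mpr hi)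
      simpa using this
    have hpow : ∀ i, i ≤ k → T (b * k + i) ω = T (b * k) ω ^ (2 ^ i) := by
      intro i
      induction i with
      | zero => intro _; simp
      | succ i ih =>
        intro hik
        have hi : i < k := hik
        have hstep := hTsq (b * k + i) ω (hcoins i hi)
        have : b * k + (i + 1) = (b * k + i) + 1 := by omega
        rw [this, hstep, ih (le_of_lt hi), ← pow_mul, ← pow_succ]
    have hbkM : M ≤ b * k := le_trans hbM (Nat.le_mul_of_pos_right b (by omega))
    have h1 := hTin (b * k) hbkM
    have h2 := hTin (b * k + k) (by omega)
    have h3 : T (b * k + k) ω = T (b * k) ω ^ (2 ^ k) := hpow k le_rfl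
    have h4 : T (b * k) ω ^ (2 ^ k) ≤ (1 - δ) ^ (2 ^ k) :=
      pow_le_pow_left₀ (hT01 (b * k) ω).1 (le_of_lt h1.2) _
    have := h2.1
    rw [h3] at this
    linarith
  -- Ilim ∈ [0,1] wherever convergence holds
  have hIlim01 : ∀ᵐ ω ∂P, Ilim ω ∈ Set.Icc (0:ℝ) 1 := by
    filter_upwards [htend] with ω hω
    exact isClosed_Icc.mem_of_tendsto hω (Filter.Eventually.of_forall (fun n => hI01 n ω))
  have hzeroone : ∀ᵐ ω ∂P, Ilim ω = 0 ∨ Ilim ω = 1 := by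
    have hall : ∀ᵐ ω ∂P, ∀ j : ℕ,
        ¬(Tendsto (fun n => I n ω) atTop (nhds (Ilim ω)) ∧
          Ilim ω ∈ Set.Icc ((1 : ℝ)/(j+2)) (1 - (1 : ℝ)/(j+2))) := ae_all_iff.mpr key
    filter_upwards [htend, hIlim01, hall] with ω hω h01 hj
    by_contra hcon
    push_neg at hcon
    obtain ⟨h0, h1⟩ := hcon
    have hlt0 : 0 < Ilim ω := lt_of_le_of_ne h01.1 (Ne.symm h0)
    have hlt1 : Ilim ω < 1 := lt_of_le_of_ne h01.2 h1
    set c : ℝ := min (Ilim ω) (1 - Ilim ω) with hcdef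
    have hcpos : 0 < c := lt_min hlt0 (by linarith)
    obtain ⟨n, hn⟩ := exists_nat_one_div_lt hcpos
    refine hj n ⟨hω, ?_, ?_⟩
    · have : (1:ℝ)/(n+2) ≤ 1/(n+1) := by
        apply div_le_div_of_nonneg_left (by norm_num) (by positivity) (by push_cast; linarith)
      have hc1 : c ≤ Ilim ω := min_le_left _ _
      linarith
    · have : (1:ℝ)/(n+2) ≤ 1/(n+1) := by
        apply div_le_div_of_nonneg_left (by norm_num) (by positivity) (by push_cast; linarith)
      have hc2 : c ≤ 1 - Ilim ω := min_le_right _ _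
      linarith
  -- expectation
  have hIlimMeas : StronglyMeasurable Ilim := by
    have h := Filtration.stronglyMeasurable_limitProcess (ℱ := F) (f := I) (μ := P)
    exact h.mono (iSup_le fun n => F.le n)
  have hintconst : ∀ n, ∫ ω, I n ω ∂P = I0 := by
    intro n
    have h0 : (P[I n | F 0]) =ᵐ[P] I 0 := hImart.2 0 n (Nat.zero_le n)
    have h1 : ∫ ω, (P[I n | F 0]) ω ∂P = ∫ ω, I n ω ∂P :=
      integral_condExp (F.le 0)
    rw [← h1, integral_congr_ae h0]
    simp only [hI0]
    simp
  have hintlim : ∫ ω, Ilim ω ∂P = I0 := by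
    have hDCT := tendsto_integral_of_dominated_convergence (μ := P)
      (F := fun n => I n) (f := Ilim) (bound := fun _ => 1)
      (fun n => ((hImart.stronglyAdapted n).mono (F.le n)).aestronglyMeasurable)
      (integrable_const 1)
      (fun n => Filter.Eventually.of_forall (fun ω => by
        have h := hI01 n ω
        show ‖I n ω‖ ≤ (1 : ℝ)
        rw [Real.norm_eq_abs, abs_le]
        exact ⟨by linarith [h.1], h.2⟩))
      htend
    have : Tendsto (fun n : ℕ => ∫ ω, I n ω ∂P) atTop (nhds I0) := by
      simp only [hintconst]; exact tendsto_const_nhds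
    exact tendsto_nhds_unique hDCT this
  -- conclude
  set A : Set Ω := {ω | Ilim ω = 1} with hAdef
  have hAmeas : MeasurableSet A := by
    have : A = Ilim ⁻¹' {1} := rfl
    rw [this]
    exact hIlimMeas.measurable (measurableSet_singleton 1)
  have hind : Ilim =ᵐ[P] A.indicator (fun _ => (1:ℝ)) := by
    filter_upwards [hzeroone] with ω hω
    rcases hω with h0 | h1
    · have hnA : ω ∉ A := by simp [hAdef, h0]
      simp [Set.indicator_of_notMem hnA, h0]
    · have hA : ω ∈ A := h1
      simp [Set.indicator_of_mem hA, h1]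
  have hPA : (P A).toReal = I0 := by
    have h1 : ∫ ω, Ilim ω ∂P = ∫ ω, A.indicator (fun _ => (1:ℝ)) ω ∂P :=
      integral_congr_ae hind
    rw [integral_indicator_const _ hAmeas] at h1
    simp only [smul_eq_mul, mul_one] at h1
    rw [← hintlim, h1]; rfl
  refine ⟨Ilim, htend, hzeroone, ?_⟩
  rw [← hPA, ENNReal.ofReal_toReal (measure_ne_top _ _)]
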